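/- arXiv:2509.03178 — 5 statements merged into one kernel-verified Lean document; each statement's English description precedes it below -/
import Mathlib

section
/- Applying the operator ((1 - ∂_x/2) ∘ ∑_{r=0}^{n} (-∂_x/2)^r) to x^n gives e_n(x, -1/2) - (n/2)·e_{n-1}(x, -1/2), where e_n(x,y) = n! ∑_{r=0}^{n} x^{n-r} y^r/(n-r)!. -/
open Finset

/-- First-order two-variable truncated exponential polynomials. -/
noncomputable def truncExp (n : ℕ) (x y : ℝ) : ℝ :=
  (n.factorial : ℝ) *
    ∑ r ∈ range (n + 1), x ^ (n - r) * y ^ r / ((n - r).factorial : ℝ)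

lemma iteratedDeriv_pow_eq (n r : ℕ) :
    iteratedDeriv r (fun t : ℝ => t ^ n) = fun x : ℝ => (n.descFactorial r : ℝ) * x ^ (n - r) := by
  induction r with
  | zero => simp
  | succ r ih =>
    rw [iteratedDeriv_succ, ih]
    funext x
    rw [deriv_const_mul _ (differentiable_pow _ |>.differentiableAt), deriv_pow_field]
    rw [Nat.descFactorial_succ]
    push_cast
    ring_nf
    rcases le_or_gt (r + 1) n with h | h
    · rw [show n - r - 1 = n - (r + 1) by omega]; ring_nf
    · rcases lt_or_eq_of_le (Nat.lt_succ_iff.mp h) with h' | h'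
      · simp [Nat.descFactorial_eq_zero_iff_lt.mpr h']
      · subst h'; simp
lemma truncExp_eq (n : ℕ) (x y : ℝ) :
    truncExp n x y = ∑ r ∈ range (n + 1), (n.descFactorial r : ℝ) * x ^ (n - r) * y ^ r := by
  rw [truncExp, Finset.mul_sum]
  refine Finset.sum_congr rfl fun r hr => ?_
  have hrn : r ≤ n := Nat.lt_succ_iff.mp (Finset.mem_range.mp hr)
  have h := Nat.factorial_mul_descFactorial hrn
  have h2 : (n.factorial : ℝ) = ((n - r).factorial : ℝ) * (n.descFactorial r : ℝ) := by
    exact_mod_cast h.symm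
  rw [h2]
  field_simp

/-- Applying `(1 - ∂_x/2) ∘ ∑_{r=0}^{n} (-∂_x/2)^r` to `x^n` gives
`e_n(x,-1/2) - (n/2) e_{n-1}(x,-1/2)`. -/
theorem pade11_H1_eq (n : ℕ) (x : ℝ) :
    (fun x : ℝ => ∑ r ∈ range (n + 1),
        (-(1 / 2) : ℝ) ^ r * iteratedDeriv r (fun t : ℝ => t ^ n) x) x -
      (1 / 2) * deriv (fun x : ℝ => ∑ r ∈ range (n + 1),
        (-(1 / 2) : ℝ) ^ r * iteratedDeriv r (fun t : ℝ => t ^ n) x) x =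
    truncExp n x (-(1 / 2)) - ((n : ℝ) / 2) * truncExp (n - 1) x (-(1 / 2)) := by
  simp only [iteratedDeriv_pow_eq]
  have hderiv : deriv (fun x : ℝ => ∑ r ∈ range (n + 1),
      (-(1 / 2) : ℝ) ^ r * ((n.descFactorial r : ℝ) * x ^ (n - r))) x
      = ∑ r ∈ range (n + 1),
        (-(1 / 2) : ℝ) ^ r * ((n.descFactorial r : ℝ) * ((n - r : ℕ) * x ^ (n - r - 1))) := by
    rw [deriv_fun_sum]
    · refine Finset.sum_congr rfl fun r _ => ?_
      rw [deriv_const_mul _ (by fun_prop), deriv_const_mul _ (by fun_prop), deriv_pow_field]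
    · intro r _
      fun_prop
  rw [hderiv, truncExp_eq, truncExp_eq]
  have h1 : (∑ r ∈ range (n + 1), (-(1 / 2) : ℝ) ^ r * ((n.descFactorial r : ℝ) * x ^ (n - r)))
      = ∑ r ∈ range (n + 1), (n.descFactorial r : ℝ) * x ^ (n - r) * (-(1 / 2) : ℝ) ^ r := by
    exact Finset.sum_congr rfl fun r _ => by ring
  rw [h1]
  congr 1
  rcases Nat.eq_zero_or_pos n with hn | hn
  · subst hn; simp
  have h2 : (∑ r ∈ range (n + 1),
      (-(1 / 2) : ℝ) ^ r * ((n.descFactorial r : ℝ) * ((n - r : ℕ) * x ^ (n - r - 1))))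
      = ∑ r ∈ range n,
        (n : ℝ) * (((n - 1).descFactorial r : ℝ) * x ^ (n - 1 - r) * (-(1 / 2) : ℝ) ^ r) := by
    rw [Finset.sum_range_succ]
    simp only [Nat.sub_self, Nat.cast_zero, zero_mul, mul_zero, add_zero]
    refine Finset.sum_congr rfl fun r hr => ?_
    have hrn : r < n := Finset.mem_range.mp hr
    have hd : (n.descFactorial r : ℝ) * ((n - r : ℕ) : ℝ) = (n : ℝ) * ((n - 1).descFactorial r : ℝ) := by
      have : (n - r) * n.descFactorial r = n * (n - 1).descFactorial r := by
        have := Nat.succ_descFactorial_succ (n - 1) r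
        rw [show n - 1 + 1 = n by omega] at this
        rw [show n.descFactorial (r + 1) = (n - r) * n.descFactorial r from Nat.descFactorial_succ n r] at this
        omega
      calc (n.descFactorial r : ℝ) * ((n - r : ℕ) : ℝ)
          = (((n - r) * n.descFactorial r : ℕ) : ℝ) := by push_cast; ring
        _ = ((n * (n - 1).descFactorial r : ℕ) : ℝ) := by exact_mod_cast congrArg (Nat.cast : ℕ → ℝ) this
        _ = (n : ℝ) * ((n - 1).descFactorial r : ℝ) := by push_cast; ring
    rw [show n - r - 1 = n - 1 - r by omega]
    calc (-(1 / 2) : ℝ) ^ r * ((n.descFactorial r : ℝ) * ((n - r : ℕ) * x ^ (n - 1 - r)))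
        = ((n.descFactorial r : ℝ) * ((n - r : ℕ) : ℝ)) * (x ^ (n - 1 - r) * (-(1 / 2) : ℝ) ^ r) := by ring
      _ = ((n : ℝ) * ((n - 1).descFactorial r : ℝ)) * (x ^ (n - 1 - r) * (-(1 / 2) : ℝ) ^ r) := by rw [hd]
      _ = (n : ℝ) * (((n - 1).descFactorial r : ℝ) * x ^ (n - 1 - r) * (-(1 / 2) : ℝ) ^ r) := by ring
  rw [h2, ← Finset.mul_sum, show n - 1 + 1 = n by omega]
  ring
end

section
/- Applying the operator (1 - (1/4)∂_x²) ∘ ∑_{r≥0} (-(1/4)∂_x²)^r to x^n gives e_n^{(2)}(x, -1/4) - (n(n-1)/4)·e_{n-2}^{(2)}(x, -1/4), where e_n^{(2)}(x,y) = n! ∑_{r=0}^{⌊n/2⌋} x^{n-2r} y^r/(n-2r)!. -/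
open Finset

/-- Second-order two-variable truncated exponential polynomials. -/
noncomputable def truncExp2 (n : ℕ) (x y : ℝ) : ℝ :=
  (n.factorial : ℝ) *
    ∑ r ∈ range (n / 2 + 1), x ^ (n - 2 * r) * y ^ r / ((n - 2 * r).factorial : ℝ)

lemma iterDeriv_pow (n : ℕ) : ∀ k : ℕ, iteratedDeriv k (fun t : ℝ => t ^ n)
    = fun x : ℝ => (n.descFactorial k : ℝ) * x ^ (n - k) := by
  intro k
  induction k with
  | zero => simp
  | succ k ih =>
    rw [iteratedDeriv_succ, ih]
    funext y
    rw [deriv_const_mul_field, deriv_pow_field]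
    rw [Nat.descFactorial_succ, Nat.sub_sub]
    push_cast
    ring

lemma deriv_sum_monomial (s : Finset ℕ) (c : ℕ → ℝ) (m : ℕ → ℕ) :
    deriv (fun x : ℝ => ∑ r ∈ s, c r * x ^ m r)
      = fun x : ℝ => ∑ r ∈ s, (c r * (m r : ℝ)) * x ^ (m r - 1) := by
  funext y
  rw [deriv_fun_sum (fun i _ => ((differentiable_pow (m i)).differentiableAt).const_mul _)]
  refine Finset.sum_congr rfl fun r _ => ?_
  rw [deriv_const_mul_field, deriv_pow_field]
  ring

lemma iter2_sum_monomial (s : Finset ℕ) (c : ℕ → ℝ) (m : ℕ → ℕ) (x : ℝ) :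
    iteratedDeriv 2 (fun x : ℝ => ∑ r ∈ s, c r * x ^ m r) x
      = ∑ r ∈ s, c r * ((m r : ℝ) * ((m r - 1 : ℕ) : ℝ)) * x ^ (m r - 2) := by
  rw [show (2:ℕ) = 1 + 1 from rfl, iteratedDeriv_succ, iteratedDeriv_one,
    deriv_sum_monomial, deriv_sum_monomial]
  refine Finset.sum_congr rfl fun r _ => ?_
  rw [Nat.sub_sub]
  ring

lemma truncExp2_eq (n : ℕ) (x y : ℝ) :
    truncExp2 n x y = ∑ r ∈ range (n / 2 + 1),
      (n.descFactorial (2 * r) : ℝ) * (x ^ (n - 2 * r) * y ^ r) := by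
  unfold truncExp2
  rw [Finset.mul_sum]
  refine Finset.sum_congr rfl fun r hr => ?_
  have h2 : 2 * r ≤ n := by
    have := Finset.mem_range.1 hr
    omega
  have hfac : ((n - 2 * r).factorial : ℝ) * (n.descFactorial (2 * r) : ℝ) = (n.factorial : ℝ) := by
    exact_mod_cast congrArg (Nat.cast (R := ℝ)) (Nat.factorial_mul_descFactorial h2)
  have hne : ((n - 2 * r).factorial : ℝ) ≠ 0 := Nat.cast_ne_zero.2 (Nat.factorial_ne_zero _)
  field_simp
  linear_combination (-(x ^ (n - 2 * r) * y ^ r)) * hfac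

lemma desc_add_two (n k : ℕ) :
    n.descFactorial (k + 2) = n.descFactorial k * ((n - k) * (n - k - 1)) := by
  rw [Nat.descFactorial_succ, Nat.descFactorial_succ, Nat.sub_sub]
  ring

lemma coeff_eq (n r : ℕ) :
    ((n.descFactorial (2 * r) * ((n - 2 * r) * (n - 2 * r - 1)) : ℕ) : ℝ)
      = (n : ℝ) * ((n : ℝ) - 1) * ((n - 2).descFactorial (2 * r) : ℝ) := by
  match n with
  | 0 => simp [Nat.zero_sub]
  | 1 =>
    have h : (1 - 2 * r) * (1 - 2 * r - 1) = 0 := Nat.mul_eq_zero.2 (by omega)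
    simp [h]
  | (m + 2) =>
    rw [← desc_add_two]
    have : (m + 2).descFactorial (2 * r + 2) = (m + 2) * ((m + 1) * m.descFactorial (2 * r)) := by
      rw [show 2 * r + 2 = (2 * r + 1) + 1 from rfl, Nat.succ_descFactorial_succ,
        Nat.succ_descFactorial_succ]
    rw [this]
    push_cast
    ring

/-- Applying `(1 - (1/4)∂_x²) ∘ ∑_{r≥0} (-(1/4)∂_x²)^r` to `x^n` gives
`e_n^{(2)}(x,-1/4) - (n(n-1)/4) e_{n-2}^{(2)}(x,-1/4)`. -/
theorem pade11_He_eq (n : ℕ) (x : ℝ) :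
    (fun x : ℝ => ∑ r ∈ range (n + 1),
        (-(1 / 4) : ℝ) ^ r * iteratedDeriv (2 * r) (fun t : ℝ => t ^ n) x) x -
      (1 / 4) * iteratedDeriv 2 (fun x : ℝ => ∑ r ∈ range (n + 1),
        (-(1 / 4) : ℝ) ^ r * iteratedDeriv (2 * r) (fun t : ℝ => t ^ n) x) x =
    truncExp2 n x (-(1 / 4)) -
      ((n : ℝ) * ((n : ℝ) - 1) / 4) * truncExp2 (n - 2) x (-(1 / 4)) := by
  have key : (fun x : ℝ => ∑ r ∈ range (n + 1),
        (-(1 / 4) : ℝ) ^ r * iteratedDeriv (2 * r) (fun t : ℝ => t ^ n) x)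
      = (fun x : ℝ => ∑ r ∈ range (n + 1),
        ((fun r => ((-(1 / 4) : ℝ) ^ r * (n.descFactorial (2 * r) : ℝ))) r)
          * x ^ ((fun r => n - 2 * r) r)) := by
    funext y
    refine Finset.sum_congr rfl fun r _ => ?_
    rw [iterDeriv_pow]
    ring
  rw [key, iter2_sum_monomial]
  simp only
  -- first term
  have h1 : truncExp2 n x (-(1 / 4)) = ∑ r ∈ range (n + 1),
      (-(1 / 4) : ℝ) ^ r * (n.descFactorial (2 * r) : ℝ) * x ^ (n - 2 * r) := by
    rw [truncExp2_eq]
    rw [Finset.sum_subset (Finset.range_subset_range.2 (by omega : n / 2 + 1 ≤ n + 1))]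
    · exact Finset.sum_congr rfl fun r _ => by ring
    · intro r hr hr'
      have : n < 2 * r := by
        have := Finset.mem_range.1 hr
        simp only [Finset.mem_range, not_lt] at hr'
        omega
      simp [Nat.descFactorial_eq_zero_iff_lt.2 this]
  have h2 : ((n : ℝ) * ((n : ℝ) - 1) / 4) * truncExp2 (n - 2) x (-(1 / 4))
      = (1 / 4) * ∑ r ∈ range (n + 1),
        (-(1 / 4) : ℝ) ^ r * (n.descFactorial (2 * r) : ℝ)
          * (((n - 2 * r : ℕ) : ℝ) * ((n - 2 * r - 1 : ℕ) : ℝ)) * x ^ (n - 2 * r - 2) := by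
    rw [truncExp2_eq]
    rw [Finset.sum_subset (Finset.range_subset_range.2 (by omega : (n - 2) / 2 + 1 ≤ n + 1))]
    · rw [Finset.mul_sum, Finset.mul_sum]
      refine Finset.sum_congr rfl fun r _ => ?_
      have hc := coeff_eq n r
      push_cast at hc ⊢
      rw [show n - 2 * r - 2 = n - 2 - 2 * r by omega]
      linear_combination (-(1 / 4) * x ^ (n - 2 - 2 * r) * (-(1 / 4) : ℝ) ^ r) * hc
    · intro r hr hr'
      have : n - 2 < 2 * r := by
        have := Finset.mem_range.1 hr
        simp only [Finset.mem_range, not_lt] at hr'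
        omega
      simp [Nat.descFactorial_eq_zero_iff_lt.2 this]
  rw [h1, h2, Finset.mul_sum]
end

section
/- Applying the operator ∑_{r≥0} U_r(1/2, 1/8) ∂_x^{2r} to x^n yields n! ∑_{r=0}^{⌊n/2⌋} U_r(1/2, 1/8) x^{n-2r}/(n-2r)!, and this polynomial equals (1/(1 + (1/2)∂_x² + (1/8)∂_x⁴)){x^n}, i.e., (1 + (1/2)∂_x² + (1/8)∂_x⁴) applied to it returns x^n. -/
open Finset

noncomputable def U2 (n : ℕ) (x y : ℝ) : ℝ :=
  (-1 : ℝ) ^ n *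
    ∑ r ∈ range (n / 2 + 1),
      ((n - r).factorial : ℝ) * x ^ (n - 2 * r) * (-y) ^ r /
        (((n - 2 * r).factorial : ℝ) * (r.factorial : ℝ))

noncomputable def aT (x y : ℝ) (m k : ℕ) : ℝ :=
  ((m - k).factorial : ℝ) * x ^ (m - 2 * k) * (-y) ^ k /
    (((m - 2 * k).factorial : ℝ) * (k.factorial : ℝ))

lemma U2_eq (m : ℕ) (x y : ℝ) :
    U2 m x y = (-1 : ℝ) ^ m * ∑ k ∈ range (m / 2 + 1), aT x y m k := rfl

lemma fac_ne (j : ℕ) : ((j.factorial : ℝ)) ≠ 0 :=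
  Nat.cast_ne_zero.2 (Nat.factorial_ne_zero _)

lemma aT_step {x y : ℝ} {m k : ℕ} (h : 2 * k + 1 ≤ m) :
    aT x y (m + 2) (k + 1) = x * aT x y (m + 1) (k + 1) + (-y) * aT x y m k := by
  obtain ⟨j, rfl⟩ : ∃ j, m = 2 * k + 1 + j := ⟨m - (2 * k + 1), by omega⟩
  simp only [aT]
  rw [show 2*k+1+j+2 - (k+1) = (k+j+1)+1 by omega,
      show 2*k+1+j+2 - 2*(k+1) = j+1 by omega,
      show 2*k+1+j+1 - (k+1) = k+j+1 by omega,
      show 2*k+1+j+1 - 2*(k+1) = j by omega,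
      show 2*k+1+j - k = k+j+1 by omega,
      show 2*k+1+j - 2*k = j+1 by omega]
  have h1 : ((j+1).factorial : ℝ) = (j+1) * j.factorial := by
    exact_mod_cast Nat.factorial_succ j
  have h2 : ((k+1).factorial : ℝ) = (k+1) * k.factorial := by
    exact_mod_cast Nat.factorial_succ k
  have h3 : (((k+j+1)+1).factorial : ℝ) = ((k+j+2) : ℝ) * ((k+j+1).factorial : ℝ) := by
    rw [Nat.factorial_succ]; push_cast; ring
  rw [h1, h2, h3]
  simp only [pow_succ]
  field_simp
  ring

lemma aT_edge {x y : ℝ} (k : ℕ) :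
    aT x y (2 * k + 2) (k + 1) = (-y) * aT x y (2 * k) k := by
  simp only [aT]
  rw [show 2*k+2 - (k+1) = k+1 by omega, show 2*k+2 - 2*(k+1) = 0 by omega,
      show 2*k - k = k by omega, show 2*k - 2*k = 0 by omega]
  simp only [pow_zero, Nat.factorial_zero, pow_succ]
  field_simp

noncomputable def Afun (x y : ℝ) (m k : ℕ) : ℝ :=
  if 2 * (k + 1) ≤ m + 1 then aT x y (m + 1) (k + 1) else 0

lemma U2_rec (m : ℕ) (x y : ℝ) :
    U2 (m + 2) x y = -x * U2 (m + 1) x y - y * U2 m x y := by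
  have key : ∑ k ∈ range ((m + 2) / 2 + 1), aT x y (m + 2) k
      = x * ∑ k ∈ range ((m + 1) / 2 + 1), aT x y (m + 1) k
        - y * ∑ k ∈ range (m / 2 + 1), aT x y m k := by
    have hr2 : (m + 2) / 2 + 1 = (m / 2 + 1) + 1 := by omega
    rw [hr2, Finset.sum_range_succ']
    have h0 : aT x y (m + 2) 0 = x * aT x y (m + 1) 0 := by
      simp only [aT]
      simp [pow_succ, Nat.factorial_succ]
      field_simp
    have hterm : ∀ k ∈ range (m / 2 + 1),
        aT x y (m + 2) (k + 1) = x * Afun x y m k + (-y) * aT x y m k := by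
      intro k hk
      simp only [mem_range] at hk
      by_cases h : 2 * k + 1 ≤ m
      · rw [Afun, if_pos (by omega), aT_step h]
      · have hm : m = 2 * k := by omega
        subst hm
        rw [Afun, if_neg (by omega), mul_zero, zero_add, aT_edge]
    rw [Finset.sum_congr rfl hterm, Finset.sum_add_distrib, ← Finset.mul_sum, ← Finset.mul_sum]
    have hA : ∑ k ∈ range (m / 2 + 1), Afun x y m k
        = ∑ k ∈ range ((m + 1) / 2), aT x y (m + 1) (k + 1) := by
      rw [← Finset.sum_subset (Finset.range_subset_range.2 (by omega : (m+1)/2 ≤ m/2 + 1))]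
      · apply Finset.sum_congr rfl
        intro k hk
        simp only [mem_range] at hk
        rw [Afun, if_pos (by omega)]
      · intro k hk1 hk2
        simp only [mem_range] at hk1 hk2
        rw [Afun, if_neg (by omega)]
    rw [hA]
    have hS1 : ∑ k ∈ range ((m + 1) / 2 + 1), aT x y (m + 1) k
        = ∑ k ∈ range ((m + 1) / 2), aT x y (m + 1) (k + 1) + aT x y (m + 1) 0 :=
      Finset.sum_range_succ' _ _
    rw [hS1, h0]
    ring
  rw [U2_eq, U2_eq, U2_eq, key]
  simp only [pow_succ]
  ring
lemma c0_val : U2 0 (1/2) (1/8) = 1 := by norm_num [U2]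

lemma c1_val : U2 1 (1/2) (1/8) = -(1/2) := by norm_num [U2]

lemma crec (r : ℕ) : U2 (r+2) (1/2) (1/8)
    = -(1/2) * U2 (r+1) (1/2) (1/8) - (1/8) * U2 r (1/2) (1/8) := by
  have := U2_rec r (1/2) (1/8); linarith

-- paste aux1 lemmas
lemma itd_const_mul (k : ℕ) (c : ℝ) {f : ℝ → ℝ} (hf : ContDiff ℝ (k : ℕ∞) f) (x : ℝ) :
    iteratedDeriv k (fun t => c * f t) x = c * iteratedDeriv k f x := by
  rw [← iteratedDerivWithin_univ, ← iteratedDerivWithin_univ]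
  exact iteratedDerivWithin_const_mul (Set.mem_univ x) uniqueDiffOn_univ c hf.contDiffWithinAt

lemma itd_pow (k : ℕ) : ∀ (m : ℕ) (x : ℝ),
    iteratedDeriv k (fun t : ℝ => t ^ m) x = (m.descFactorial k : ℝ) * x ^ (m - k) := by
  induction k with
  | zero => intro m x; simp
  | succ k ih =>
    intro m x
    rw [iteratedDeriv_succ']
    have hd : deriv (fun t : ℝ => t ^ m) = fun t : ℝ => (m : ℝ) * t ^ (m - 1) := by
      funext t; exact deriv_pow_field m
    rw [hd, itd_const_mul k (m : ℝ) (f := fun t => t ^ (m-1)) (contDiff_id.pow _) x, ih]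
    have h1 : (m.descFactorial (k + 1) : ℝ) = (m : ℝ) * ((m - 1).descFactorial k : ℝ) := by
      cases m with
      | zero => simp
      | succ m => rw [Nat.succ_descFactorial_succ]; push_cast; ring
    rw [h1, show m - 1 - k = m - (k + 1) by omega]
    ring

lemma itd_sum {ι : Type*} (u : Finset ι) (f : ι → ℝ → ℝ) (k : ℕ)
    (h : ∀ j ∈ u, ContDiff ℝ (k : ℕ∞) (f j)) (x : ℝ) :
    iteratedDeriv k (fun z => ∑ j ∈ u, f j z) x = ∑ j ∈ u, iteratedDeriv k (f j) x := by
  simp only [iteratedDeriv_eq_iteratedFDeriv]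
  rw [iteratedFDeriv_sum h]
  simp [Finset.sum_apply]

lemma part1 (n : ℕ) (x : ℝ) :
    (∑ r ∈ range (n + 1),
        U2 r (1 / 2) (1 / 8) * iteratedDeriv (2 * r) (fun t : ℝ => t ^ n) x) =
      (n.factorial : ℝ) *
        ∑ r ∈ range (n / 2 + 1),
          U2 r (1 / 2) (1 / 8) * x ^ (n - 2 * r) / ((n - 2 * r).factorial : ℝ) := by
  rw [← Finset.sum_subset (Finset.range_subset_range.2 (by omega : n / 2 + 1 ≤ n + 1))]
  · rw [Finset.mul_sum]
    apply Finset.sum_congr rfl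
    intro r hr
    simp only [mem_range] at hr
    have h2r : 2 * r ≤ n := by omega
    rw [itd_pow]
    have hfac : ((n - 2*r).factorial : ℝ) * (n.descFactorial (2*r) : ℝ) = (n.factorial : ℝ) := by
      exact_mod_cast Nat.factorial_mul_descFactorial h2r
    have hne := fac_ne (n - 2*r)
    have : (n.descFactorial (2*r) : ℝ) = (n.factorial : ℝ) / ((n - 2*r).factorial : ℝ) := by
      rw [eq_div_iff hne]; linarith [hfac]
    rw [this]; ring
  · intro r hr1 hr2
    simp only [mem_range] at hr1 hr2
    rw [itd_pow]
    have : n.descFactorial (2 * r) = 0 := Nat.descFactorial_eq_zero_iff_lt.2 (by omega)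
    simp [this]

noncomputable def Pv (n : ℕ) (x : ℝ) (s : ℕ) : ℝ :=
  (n.factorial : ℝ) / ((n - 2 * s).factorial : ℝ) * x ^ (n - 2 * s)

noncomputable def H1 (n : ℕ) (x : ℝ) (s : ℕ) : ℝ :=
  if 1 ≤ s ∧ 2 * s ≤ n then U2 (s - 1) (1/2) (1/8) * Pv n x s else 0

noncomputable def H2 (n : ℕ) (x : ℝ) (s : ℕ) : ℝ :=
  if 2 ≤ s ∧ 2 * s ≤ n then U2 (s - 2) (1/2) (1/8) * Pv n x s else 0

lemma t0_eq (n : ℕ) (x : ℝ) (r : ℕ) :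
    (n.factorial : ℝ) * U2 r (1/2) (1/8) / ((n - 2*r).factorial : ℝ) * x ^ (n - 2*r)
      = U2 r (1/2) (1/8) * Pv n x r := by
  rw [Pv]; ring

lemma t2_eq (n : ℕ) (x : ℝ) (r : ℕ) :
    (n.factorial : ℝ) * U2 r (1/2) (1/8) / ((n - 2*r).factorial : ℝ)
        * (((n - 2*r).descFactorial 2 : ℝ) * x ^ (n - 2*r - 2))
      = H1 n x (r + 1) := by
  by_cases h : 2 * (r + 1) ≤ n
  · rw [H1, if_pos ⟨by omega, h⟩, show r + 1 - 1 = r by omega, Pv,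
      show n - 2 * (r + 1) = n - 2*r - 2 by omega]
    have key : ((n - 2*r - 2).factorial : ℝ) * ((n - 2*r).descFactorial 2 : ℝ)
        = ((n - 2*r).factorial : ℝ) := by
      exact_mod_cast Nat.factorial_mul_descFactorial (show 2 ≤ n - 2*r by omega)
    have hne2 := fac_ne (n - 2*r - 2)
    have hdF : ((n - 2*r).descFactorial 2 : ℝ)
        = ((n - 2*r).factorial : ℝ) / ((n - 2*r - 2).factorial : ℝ) := by
      rw [eq_div_iff hne2]; linarith [key]
    rw [hdF]
    have hne1 := fac_ne (n - 2*r)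
    field_simp
  · have hz : (n - 2*r).descFactorial 2 = 0 := Nat.descFactorial_eq_zero_iff_lt.2 (by omega)
    rw [hz, H1, if_neg (by omega)]
    push_cast; ring

lemma t4_eq (n : ℕ) (x : ℝ) (r : ℕ) :
    (n.factorial : ℝ) * U2 r (1/2) (1/8) / ((n - 2*r).factorial : ℝ)
        * (((n - 2*r).descFactorial 4 : ℝ) * x ^ (n - 2*r - 4))
      = H2 n x (r + 2) := by
  by_cases h : 2 * (r + 2) ≤ n
  · rw [H2, if_pos ⟨by omega, h⟩, show r + 2 - 2 = r by omega, Pv,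
      show n - 2 * (r + 2) = n - 2*r - 4 by omega]
    have key : ((n - 2*r - 4).factorial : ℝ) * ((n - 2*r).descFactorial 4 : ℝ)
        = ((n - 2*r).factorial : ℝ) := by
      exact_mod_cast Nat.factorial_mul_descFactorial (show 4 ≤ n - 2*r by omega)
    have hne2 := fac_ne (n - 2*r - 4)
    have hdF : ((n - 2*r).descFactorial 4 : ℝ)
        = ((n - 2*r).factorial : ℝ) / ((n - 2*r - 4).factorial : ℝ) := by
      rw [eq_div_iff hne2]; linarith [key]
    rw [hdF]
    have hne1 := fac_ne (n - 2*r)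
    field_simp
  · have hz : (n - 2*r).descFactorial 4 = 0 := Nat.descFactorial_eq_zero_iff_lt.2 (by omega)
    rw [hz, H2, if_neg (by omega)]
    push_cast; ring

lemma shift1 (n : ℕ) (x : ℝ) :
    ∑ r ∈ range (n / 2 + 1), H1 n x (r + 1) = ∑ s ∈ range (n / 2 + 1), H1 n x s := by
  have e1 := Finset.sum_range_succ' (H1 n x) (n / 2 + 1)
  have e2 := Finset.sum_range_succ (H1 n x) (n / 2 + 1)
  have h0 : H1 n x 0 = 0 := if_neg (by omega)
  have hK : H1 n x (n / 2 + 1) = 0 := if_neg (by omega)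
  rw [h0] at e1; rw [hK] at e2
  linarith

lemma shift2 (n : ℕ) (x : ℝ) :
    ∑ r ∈ range (n / 2 + 1), H2 n x (r + 2) = ∑ s ∈ range (n / 2 + 1), H2 n x s := by
  have e1 := Finset.sum_range_succ' (H2 n x) (n / 2 + 2)
  have e1b := Finset.sum_range_succ' (fun r => H2 n x (r + 1)) (n / 2 + 1)
  have e2 := Finset.sum_range_succ (H2 n x) (n / 2 + 2)
  have e2b := Finset.sum_range_succ (H2 n x) (n / 2 + 1)
  have h0 : H2 n x 0 = 0 := if_neg (by omega)
  have h1 : H2 n x 1 = 0 := if_neg (by omega)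
  have hK : H2 n x (n / 2 + 1) = 0 := if_neg (by omega)
  have hK2 : H2 n x (n / 2 + 2) = 0 := if_neg (by omega)
  have hre : ∑ r ∈ range (n / 2 + 1), H2 n x (r + 1 + 1)
      = ∑ r ∈ range (n / 2 + 1), H2 n x (r + 2) := rfl
  rw [show n / 2 + 2 = n / 2 + 1 + 1 from rfl] at e1 e2
  rw [hre] at e1b
  simp only [zero_add] at e1b
  rw [h0] at e1; rw [h1] at e1b; rw [hK2] at e2; rw [hK] at e2b
  linarith

lemma bracket_sum (n : ℕ) (x : ℝ) :
    ∑ s ∈ range (n / 2 + 1),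
      (U2 s (1/2) (1/8) * Pv n x s + (1/2) * H1 n x s + (1/8) * H2 n x s) = x ^ n := by
  rw [Finset.sum_range_succ']
  have hF0 : U2 0 (1/2) (1/8) * Pv n x 0 + (1/2) * H1 n x 0 + (1/8) * H2 n x 0 = x ^ n := by
    have h0 : H1 n x 0 = 0 := if_neg (by omega)
    have h0' : H2 n x 0 = 0 := if_neg (by omega)
    rw [h0, h0', c0_val, Pv, show n - 2 * 0 = n by omega, div_self (fac_ne n)]
    ring
  have hz : ∀ i ∈ range (n / 2),
      U2 (i+1) (1/2) (1/8) * Pv n x (i+1) + (1/2) * H1 n x (i+1) + (1/8) * H2 n x (i+1) = 0 := by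
    intro i hi
    simp only [mem_range] at hi
    have h2s : 2 * (i + 1) ≤ n := by omega
    have hH1 : H1 n x (i+1) = U2 i (1/2) (1/8) * Pv n x (i+1) := by
      rw [H1, if_pos ⟨by omega, h2s⟩, show i + 1 - 1 = i by omega]
    cases i with
    | zero =>
      have hH2 : H2 n x 1 = 0 := if_neg (by omega)
      rw [hH1, hH2, c0_val, c1_val]; ring
    | succ i' =>
      have hH2 : H2 n x (i' + 2) = U2 i' (1/2) (1/8) * Pv n x (i' + 2) := by
        rw [H2, if_pos ⟨by omega, by omega⟩, show i' + 2 - 2 = i' by omega]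
      rw [show i' + 1 + 1 = i' + 2 from rfl] at *
      rw [hH1, hH2]
      linear_combination (Pv n x (i' + 2)) * crec i'
  rw [Finset.sum_congr rfl hz]
  rw [Finset.sum_const_zero, zero_add]; exact hF0

/-- Applying `∑_{r≥0} U_r(1/2,1/8) ∂_x^{2r}` to `x^n` yields
`n! ∑_{r=0}^{⌊n/2⌋} U_r(1/2,1/8) x^{n-2r}/(n-2r)!`, and applying
`1 + (1/2)∂_x² + (1/8)∂_x⁴` to the result returns `x^n`. -/
theorem pade02_He_eq (n : ℕ) :
    (∀ x : ℝ,
      (∑ r ∈ range (n + 1),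
          U2 r (1 / 2) (1 / 8) * iteratedDeriv (2 * r) (fun t : ℝ => t ^ n) x) =
        (n.factorial : ℝ) *
          ∑ r ∈ range (n / 2 + 1),
            U2 r (1 / 2) (1 / 8) * x ^ (n - 2 * r) / ((n - 2 * r).factorial : ℝ)) ∧
    (∀ x : ℝ,
      (fun x : ℝ => ∑ r ∈ range (n + 1),
          U2 r (1 / 2) (1 / 8) * iteratedDeriv (2 * r) (fun t : ℝ => t ^ n) x) x +
        (1 / 2) * iteratedDeriv 2 (fun x : ℝ => ∑ r ∈ range (n + 1),
          U2 r (1 / 2) (1 / 8) * iteratedDeriv (2 * r) (fun t : ℝ => t ^ n) x) x +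
        (1 / 8) * iteratedDeriv 4 (fun x : ℝ => ∑ r ∈ range (n + 1),
          U2 r (1 / 2) (1 / 8) * iteratedDeriv (2 * r) (fun t : ℝ => t ^ n) x) x =
      x ^ n) := by
  refine ⟨part1 n, ?_⟩
  intro x
  have hfun : (fun x : ℝ => ∑ r ∈ range (n + 1),
        U2 r (1 / 2) (1 / 8) * iteratedDeriv (2 * r) (fun t : ℝ => t ^ n) x)
      = fun z : ℝ => ∑ r ∈ range (n / 2 + 1),
          (n.factorial : ℝ) * U2 r (1 / 2) (1 / 8) / ((n - 2 * r).factorial : ℝ)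
            * z ^ (n - 2 * r) := by
    funext z
    rw [part1 n z, Finset.mul_sum]
    exact Finset.sum_congr rfl fun r _ => by ring
  simp only [hfun]
  have hD : ∀ j : ℕ,
      iteratedDeriv j (fun z : ℝ => ∑ r ∈ range (n / 2 + 1),
          (n.factorial : ℝ) * U2 r (1 / 2) (1 / 8) / ((n - 2 * r).factorial : ℝ)
            * z ^ (n - 2 * r)) x
        = ∑ r ∈ range (n / 2 + 1),
            (n.factorial : ℝ) * U2 r (1 / 2) (1 / 8) / ((n - 2 * r).factorial : ℝ)
              * (((n - 2 * r).descFactorial j : ℝ) * x ^ (n - 2 * r - j)) := by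
    intro j
    rw [itd_sum (range (n / 2 + 1))
      (fun r z => (n.factorial : ℝ) * U2 r (1 / 2) (1 / 8) / ((n - 2 * r).factorial : ℝ)
        * z ^ (n - 2 * r)) j (fun r _ => contDiff_const.mul (contDiff_id.pow _)) x]
    refine Finset.sum_congr rfl fun r _ => ?_
    rw [itd_const_mul j _ (f := fun z => z ^ (n - 2 * r)) (contDiff_id.pow _) x, itd_pow]
  rw [hD 2, hD 4]
  have h0x : ∑ r ∈ range (n + 1),
      U2 r (1 / 2) (1 / 8) * iteratedDeriv (2 * r) (fun t : ℝ => t ^ n) x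
      = ∑ r ∈ range (n / 2 + 1),
          (n.factorial : ℝ) * U2 r (1 / 2) (1 / 8) / ((n - 2 * r).factorial : ℝ)
            * x ^ (n - 2 * r) := congrFun hfun x
  rw [h0x]
  have E0 : ∑ r ∈ range (n / 2 + 1),
      (n.factorial : ℝ) * U2 r (1 / 2) (1 / 8) / ((n - 2 * r).factorial : ℝ)
        * x ^ (n - 2 * r)
      = ∑ r ∈ range (n / 2 + 1), U2 r (1/2) (1/8) * Pv n x r :=
    Finset.sum_congr rfl fun r _ => t0_eq n x r
  have E2 : ∑ r ∈ range (n / 2 + 1),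
      (n.factorial : ℝ) * U2 r (1 / 2) (1 / 8) / ((n - 2 * r).factorial : ℝ)
        * (((n - 2 * r).descFactorial 2 : ℝ) * x ^ (n - 2 * r - 2))
      = ∑ r ∈ range (n / 2 + 1), H1 n x (r + 1) :=
    Finset.sum_congr rfl fun r _ => t2_eq n x r
  have E4 : ∑ r ∈ range (n / 2 + 1),
      (n.factorial : ℝ) * U2 r (1 / 2) (1 / 8) / ((n - 2 * r).factorial : ℝ)
        * (((n - 2 * r).descFactorial 4 : ℝ) * x ^ (n - 2 * r - 4))
      = ∑ r ∈ range (n / 2 + 1), H2 n x (r + 2) :=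
    Finset.sum_congr rfl fun r _ => t4_eq n x r
  rw [E0, E2, E4, shift1, shift2, Finset.mul_sum, Finset.mul_sum,
    ← Finset.sum_add_distrib, ← Finset.sum_add_distrib]
  exact bracket_sum n x
end

section
/- Let z_n(x) = e_n(x, -1/2) - (n/2)·e_{n-1}(x, -1/2) (the [1|1] Padé approximant of H_n^{(1)}(x,-1)). Then z_n satisfies the third-order ODE x·z_n'''(x) + (2 - n)·z_n''(x) + 4(1 - x)·z_n'(x) + 4n·z_n(x) = 0. -/
open Finset

lemma truncExp_zero (x y : ℝ) : truncExp 0 x y = 1 := by simp [truncExp]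

lemma truncExp_succ (n : ℕ) (x y : ℝ) :
    truncExp (n + 1) x y = x ^ (n + 1) + ((n : ℝ) + 1) * y * truncExp n x y := by
  unfold truncExp
  rw [Finset.sum_range_succ']
  have h0 : x ^ (n + 1 - 0) * y ^ 0 / ((n + 1 - 0).factorial : ℝ)
      = x ^ (n + 1) / ((n + 1).factorial : ℝ) := by simp
  rw [h0, mul_add]
  have h1 : ((n + 1).factorial : ℝ) * (x ^ (n + 1) / ((n + 1).factorial : ℝ)) = x ^ (n + 1) := by
    rw [mul_div_cancel₀]
    exact_mod_cast (n + 1).factorial_ne_zero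
  rw [h1]
  rw [Finset.mul_sum, Finset.mul_sum, Finset.mul_sum]
  rw [add_comm]
  congr 1
  apply Finset.sum_congr rfl
  intro r hr
  have : n + 1 - (r + 1) = n - r := by omega
  rw [this, Nat.factorial_succ]
  push_cast
  ring

lemma truncExp_hasDerivAt (n : ℕ) (y x : ℝ) :
    HasDerivAt (fun x => truncExp (n + 1) x y) (((n : ℝ) + 1) * truncExp n x y) x := by
  have key : ∀ x : ℝ, HasDerivAt (fun x => truncExp (n + 1) x y)
      (((n + 1).factorial : ℝ) * ∑ r ∈ range (n + 2),
        ((n + 1 - r : ℕ) : ℝ) * x ^ (n + 1 - r - 1) * (y ^ r / ((n + 1 - r).factorial : ℝ))) x := by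
    intro x
    unfold truncExp
    apply HasDerivAt.const_mul
    have : ∀ r ∈ range (n + 2), HasDerivAt (fun x : ℝ => x ^ (n + 1 - r) * y ^ r / ((n + 1 - r).factorial : ℝ))
        (((n + 1 - r : ℕ) : ℝ) * x ^ (n + 1 - r - 1) * (y ^ r / ((n + 1 - r).factorial : ℝ))) x := by
      intro r _
      have h := ((hasDerivAt_pow (n + 1 - r) x).mul_const (y ^ r)).div_const ((n + 1 - r).factorial : ℝ)
      convert h using 1
      · rfl
      · rfl
      ring
    exact HasDerivAt.fun_sum this
  have heq : ((n + 1).factorial : ℝ) * ∑ r ∈ range (n + 2),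
        ((n + 1 - r : ℕ) : ℝ) * x ^ (n + 1 - r - 1) * (y ^ r / ((n + 1 - r).factorial : ℝ))
      = ((n : ℝ) + 1) * truncExp n x y := by
    unfold truncExp
    rw [Finset.sum_range_succ]
    simp only [Nat.sub_self]
    norm_num
    rw [Finset.mul_sum, Finset.mul_sum, Finset.mul_sum]
    apply Finset.sum_congr rfl
    intro r hr
    have hr' : r ≤ n := by simpa using Nat.lt_succ_iff.mp (Finset.mem_range.mp hr)
    have h2 : n + 1 - r = n - r + 1 := by omega
    have h3 : n + 1 - r - 1 = n - r := by omega
    rw [h3, h2]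
    generalize n - r = k
    have hfac : (k.factorial : ℝ) ≠ 0 := by exact_mod_cast k.factorial_ne_zero
    rw [Nat.factorial_succ, Nat.factorial_succ]
    push_cast
    field_simp
  exact heq ▸ key x

lemma truncExp_half_hasDerivAt (n : ℕ) (x : ℝ) :
    HasDerivAt (fun x => truncExp n x (-(1 / 2)))
      (2 * x ^ n - 2 * truncExp n x (-(1 / 2))) x := by
  cases n with
  | zero =>
    have h : (fun x : ℝ => truncExp 0 x (-(1 / 2))) = fun _ => (1 : ℝ) :=
      funext fun x => truncExp_zero _ _
    rw [h, truncExp_zero]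
    have h0 : (2 : ℝ) * x ^ 0 - 2 * 1 = 0 := by norm_num
    rw [h0]
    exact hasDerivAt_const x 1
  | succ m =>
    have h := truncExp_hasDerivAt m (-(1 / 2)) x
    convert h using 1
    have h2 := truncExp_succ m x (-(1 / 2))
    linarith

lemma z_eq (n : ℕ) (x : ℝ) :
    truncExp n x (-(1 / 2)) - ((n : ℝ) / 2) * truncExp (n - 1) x (-(1 / 2))
      = 2 * truncExp n x (-(1 / 2)) - x ^ n := by
  cases n with
  | zero => norm_num [truncExp_zero]
  | succ m =>
    have h := truncExp_succ m x (-(1 / 2))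
    simp only [Nat.succ_sub_one]
    push_cast
    linarith

/-- The [1|1] Padé approximant `z_n(x) = e_n(x,-1/2) - (n/2) e_{n-1}(x,-1/2)`
satisfies `x z''' + (2-n) z'' + 4(1-x) z' + 4n z = 0`. -/
theorem pade11_H1_ode (n : ℕ) (x : ℝ) :
    x * iteratedDeriv 3
        (fun x : ℝ => truncExp n x (-(1 / 2)) -
          ((n : ℝ) / 2) * truncExp (n - 1) x (-(1 / 2))) x +
      (2 - (n : ℝ)) * iteratedDeriv 2
        (fun x : ℝ => truncExp n x (-(1 / 2)) -
          ((n : ℝ) / 2) * truncExp (n - 1) x (-(1 / 2))) x +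
      4 * (1 - x) * deriv
        (fun x : ℝ => truncExp n x (-(1 / 2)) -
          ((n : ℝ) / 2) * truncExp (n - 1) x (-(1 / 2))) x +
      4 * (n : ℝ) *
        (truncExp n x (-(1 / 2)) - ((n : ℝ) / 2) * truncExp (n - 1) x (-(1 / 2))) = 0 := by
  have hfun : (fun x : ℝ => truncExp n x (-(1 / 2)) -
      ((n : ℝ) / 2) * truncExp (n - 1) x (-(1 / 2)))
      = fun x : ℝ => 2 * truncExp n x (-(1 / 2)) - x ^ n := funext fun x => z_eq n x
  rw [hfun, z_eq]
  set F : ℝ → ℝ := fun x => 2 * truncExp n x (-(1 / 2)) - x ^ n with hF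
  set G1 : ℝ → ℝ := fun x => 4 * x ^ n - 4 * truncExp n x (-(1 / 2)) - (n : ℝ) * x ^ (n - 1) with hG1
  set G2 : ℝ → ℝ := fun x => 4 * (n : ℝ) * x ^ (n - 1) - 8 * x ^ n + 8 * truncExp n x (-(1 / 2))
      - (n : ℝ) * ((n - 1 : ℕ) : ℝ) * x ^ (n - 1 - 1) with hG2
  have hd1 : ∀ x : ℝ, HasDerivAt F (G1 x) x := by
    intro x
    have h := ((truncExp_half_hasDerivAt n x).const_mul 2).sub (hasDerivAt_pow n x)
    convert h using 1
    · rfl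
    · rfl
    · rfl
    simp [hG1]
    ring
  have hd2 : ∀ x : ℝ, HasDerivAt G1 (G2 x) x := by
    intro x
    have h := (((hasDerivAt_pow n x).const_mul 4).sub
      ((truncExp_half_hasDerivAt n x).const_mul 4)).sub
      ((hasDerivAt_pow (n - 1) x).const_mul (n : ℝ))
    convert h using 1
    · rfl
    · rfl
    · rfl
    simp [hG2]
    ring
  have hd3 : ∀ x : ℝ, HasDerivAt G2
      (4 * (n : ℝ) * ((n - 1 : ℕ) : ℝ) * x ^ (n - 1 - 1) - 8 * (n : ℝ) * x ^ (n - 1)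
        + 8 * (2 * x ^ n - 2 * truncExp n x (-(1 / 2)))
        - (n : ℝ) * ((n - 1 : ℕ) : ℝ) * ((n - 1 - 1 : ℕ) : ℝ) * x ^ (n - 1 - 1 - 1)) x := by
    intro x
    have h := ((((hasDerivAt_pow (n - 1) x).const_mul (4 * (n : ℝ))).sub
      ((hasDerivAt_pow n x).const_mul 8)).add
      ((truncExp_half_hasDerivAt n x).const_mul 8)).sub
      ((hasDerivAt_pow (n - 1 - 1) x).const_mul ((n : ℝ) * ((n - 1 : ℕ) : ℝ)))
    convert h using 1
    · rfl
    · rfl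
    · rfl
    ring
  have e1 : deriv F = G1 := funext fun x => (hd1 x).deriv
  have e2 : deriv G1 = G2 := funext fun x => (hd2 x).deriv
  have e3' : iteratedDeriv 2 F = G2 := by
    rw [show (2 : ℕ) = 1 + 1 from rfl, iteratedDeriv_succ, iteratedDeriv_one, e1, e2]
  have e3 : iteratedDeriv 2 F x = G2 x := congrFun e3' x
  have e4 : iteratedDeriv 3 F x = 4 * (n : ℝ) * ((n - 1 : ℕ) : ℝ) * x ^ (n - 1 - 1)
      - 8 * (n : ℝ) * x ^ (n - 1) + 8 * (2 * x ^ n - 2 * truncExp n x (-(1 / 2)))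
      - (n : ℝ) * ((n - 1 : ℕ) : ℝ) * ((n - 1 - 1 : ℕ) : ℝ) * x ^ (n - 1 - 1 - 1) := by
    rw [iteratedDeriv_succ, e3']
    exact (hd3 x).deriv
  rw [e3, e4, e1]
  simp only [hG1, hG2, hF]
  set t := truncExp n x (-(1 / 2)) with ht
  rcases n with _ | _ | _ | m
  · have h1 : t = 1 := truncExp_zero x _
    norm_num
    ring
  · norm_num; ring
  · norm_num; ring
  · simp only [Nat.add_sub_cancel]
    push_cast
    ring
end

section
/- The polynomials Z_n(x) := e_n^{(2)}(x,y) = n! ∑_{r=0}^{⌊n/2⌋} x^{n-2r} y^r/(n-2r)! satisfy, for each fixed real y, the ODE y·x·Z_n'''(x) - n·y·Z_n''(x) - x·Z_n'(x) + n·Z_n(x) = 0. -/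
open Finset

/-- First derivative of `truncExp2` in `x`, termwise. -/
noncomputable def truncExp2D1 (n : ℕ) (y x : ℝ) : ℝ :=
  (n.factorial : ℝ) * ∑ r ∈ range (n / 2 + 1),
    ((n - 2 * r : ℕ) : ℝ) * x ^ (n - 2 * r - 1) * y ^ r / ((n - 2 * r).factorial : ℝ)

/-- Second derivative of `truncExp2` in `x`, termwise. -/
noncomputable def truncExp2D2 (n : ℕ) (y x : ℝ) : ℝ :=
  (n.factorial : ℝ) * ∑ r ∈ range (n / 2 + 1),
    ((n - 2 * r : ℕ) : ℝ) * (((n - 2 * r - 1 : ℕ) : ℝ) * x ^ (n - 2 * r - 1 - 1)) * y ^ r /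
      ((n - 2 * r).factorial : ℝ)

lemma truncExp2_hasDerivAt (n : ℕ) (y x : ℝ) :
    HasDerivAt (fun x : ℝ => truncExp2 n x y) (truncExp2D1 n y x) x := by
  unfold truncExp2 truncExp2D1
  apply HasDerivAt.const_mul
  apply HasDerivAt.fun_sum
  intro r _
  exact ((hasDerivAt_pow (n - 2 * r) x).mul_const (y ^ r)).div_const _

lemma truncExp2D1_hasDerivAt (n : ℕ) (y x : ℝ) :
    HasDerivAt (fun x : ℝ => truncExp2D1 n y x) (truncExp2D2 n y x) x := by
  unfold truncExp2D1 truncExp2D2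
  apply HasDerivAt.const_mul
  apply HasDerivAt.fun_sum
  intro r _
  exact (((hasDerivAt_pow (n - 2 * r - 1) x).const_mul _).mul_const (y ^ r)).div_const _

lemma truncExp2_key (n : ℕ) (y x : ℝ) :
    y * truncExp2D2 n y x = truncExp2 n x y - x ^ n := by
  unfold truncExp2D2 truncExp2
  set m := n / 2 with hm
  have hfac : (n.factorial : ℝ) ≠ 0 := Nat.cast_ne_zero.mpr n.factorial_ne_zero
  -- rewrite y * (n! * ∑ ...) as n! * ∑ y * ...
  rw [mul_comm y, mul_assoc, Finset.sum_mul]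
  -- last term of the second-derivative sum vanishes
  rw [Finset.sum_range_succ]
  have hlast : ((n - 2 * m : ℕ) : ℝ) * (((n - 2 * m - 1 : ℕ) : ℝ) * x ^ (n - 2 * m - 1 - 1)) *
      y ^ m / ((n - 2 * m).factorial : ℝ) * y = 0 := by
    have h : n - 2 * m = 0 ∨ n - 2 * m - 1 = 0 := by omega
    rcases h with h | h <;> rw [h] <;> simp
  rw [hlast, add_zero]
  -- termwise identification with the shifted sum
  have hterm : ∀ r ∈ range m,
      ((n - 2 * r : ℕ) : ℝ) * (((n - 2 * r - 1 : ℕ) : ℝ) * x ^ (n - 2 * r - 1 - 1)) *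
        y ^ r / ((n - 2 * r).factorial : ℝ) * y =
      x ^ (n - 2 * (r + 1)) * y ^ (r + 1) / ((n - 2 * (r + 1)).factorial : ℝ) := by
    intro r hr
    rw [Finset.mem_range] at hr
    have hk : 2 ≤ n - 2 * r := by omega
    obtain ⟨a, ha⟩ : ∃ a, n - 2 * r = a + 2 := ⟨n - 2 * r - 2, by omega⟩
    have h1 : n - 2 * r - 1 = a + 1 := by omega
    have h2 : n - 2 * r - 1 - 1 = a := by omega
    have h3 : n - 2 * (r + 1) = a := by omega
    rw [ha, h3, show a + 2 - 1 = a + 1 from rfl, show a + 1 - 1 = a from rfl]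
    rw [Nat.factorial_succ, Nat.factorial_succ]
    have hfa : (a.factorial : ℝ) ≠ 0 := Nat.cast_ne_zero.mpr a.factorial_ne_zero
    push_cast
    field_simp
    ring
  rw [Finset.sum_congr rfl hterm]
  -- reindex: sum over range m of h (r+1) equals full sum minus the r = 0 term
  have hshift : ∑ r ∈ range (m + 1), x ^ (n - 2 * r) * y ^ r / ((n - 2 * r).factorial : ℝ) =
      (∑ r ∈ range m, x ^ (n - 2 * (r + 1)) * y ^ (r + 1) / ((n - 2 * (r + 1)).factorial : ℝ)) +
        x ^ (n - 2 * 0) * y ^ 0 / ((n - 2 * 0).factorial : ℝ) :=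
    Finset.sum_range_succ' _ m
  have h0 : x ^ (n - 2 * 0) * y ^ 0 / ((n - 2 * 0).factorial : ℝ) = x ^ n / n.factorial := by
    simp
  rw [h0] at hshift
  have : (∑ r ∈ range m, x ^ (n - 2 * (r + 1)) * y ^ (r + 1) /
      ((n - 2 * (r + 1)).factorial : ℝ)) =
      (∑ r ∈ range (m + 1), x ^ (n - 2 * r) * y ^ r / ((n - 2 * r).factorial : ℝ)) -
        x ^ n / n.factorial := by
    rw [hshift]; ring
  rw [this]
  field_simp

/-- `Z_n = e_n^{(2)}(·,y)` satisfies `yx Z''' - ny Z'' - x Z' + n Z = 0`. -/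
theorem truncExp2_ode (n : ℕ) (y x : ℝ) :
    y * x * iteratedDeriv 3 (fun x : ℝ => truncExp2 n x y) x -
      (n : ℝ) * y * iteratedDeriv 2 (fun x : ℝ => truncExp2 n x y) x -
      x * deriv (fun x : ℝ => truncExp2 n x y) x +
      (n : ℝ) * truncExp2 n x y = 0 := by
  have hd1 : deriv (fun x : ℝ => truncExp2 n x y) = fun x => truncExp2D1 n y x :=
    funext fun x => (truncExp2_hasDerivAt n y x).deriv
  have hd2 : iteratedDeriv 2 (fun x : ℝ => truncExp2 n x y) = fun x => truncExp2D2 n y x := by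
    rw [show (2 : ℕ) = 1 + 1 from rfl, iteratedDeriv_succ, iteratedDeriv_one, hd1]
    exact funext fun x => (truncExp2D1_hasDerivAt n y x).deriv
  have hd3 : y * iteratedDeriv 3 (fun x : ℝ => truncExp2 n x y) x =
      truncExp2D1 n y x - (n : ℝ) * x ^ (n - 1) := by
    rw [show (3 : ℕ) = 2 + 1 from rfl, iteratedDeriv_succ, hd2]
    rw [← deriv_const_mul_field y]
    have : (fun x => y * truncExp2D2 n y x) = fun x : ℝ => truncExp2 n x y - x ^ n :=
      funext fun x => truncExp2_key n y x
    rw [this]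
    exact ((truncExp2_hasDerivAt n y x).sub (hasDerivAt_pow n x)).deriv
  have hB : y * truncExp2D2 n y x = truncExp2 n x y - x ^ n := truncExp2_key n y x
  have hC : (n : ℝ) * (x ^ n - x * x ^ (n - 1)) = 0 := by
    cases n with
    | zero => simp
    | succ m => simp [pow_succ, mul_comm]
  rw [hd2, hd1]
  linear_combination x * hd3 - (n : ℝ) * hB + hC
end
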